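/- Let t, s, f : [-1,1] → [-1,1] be continuous with t(0) = s(0) = f(0) = 0 and f = t ∘ s. Suppose there exist 0 ≤ x < x' ≤ 1 and y⁻ < 0 ≤ y⁺ such that x is a positive right departure of s (or x = 0) with s(x) = y⁺, and s([x,x']) = [y⁻,y⁺]. Suppose moreover s₀ : [-1,1] → [-1,1] is a sign-preserving map with t ∘ s₀ = f. Then [y⁻,y⁺] is a liftable range for t. -/
import Mathlib


open Set

/-- A positive radial departure of `f`. -/
def PosRD (f : ℝ → ℝ) (x₁ x₂ : ℝ) : Prop :=
  -1 ≤ x₁ ∧ x₁ < 0 ∧ 0 < x₂ ∧ x₂ ≤ 1 ∧ f '' Ioo x₁ x₂ = Ioo (f x₁) (f x₂)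

/-- A negative radial departure of `f`. -/
def NegRD (f : ℝ → ℝ) (x₁ x₂ : ℝ) : Prop :=
  -1 ≤ x₁ ∧ x₁ < 0 ∧ 0 < x₂ ∧ x₂ ≤ 1 ∧ f '' Ioo x₁ x₂ = Ioo (f x₂) (f x₁)

/-- A radial departure of `f` (of either orientation). -/
def RadialDeparture (f : ℝ → ℝ) (x₁ x₂ : ℝ) : Prop := PosRD f x₁ x₂ ∨ NegRD f x₁ x₂

/-- A (right) departure of `g` (viewed as a map on `[0,1]`). -/
def Departure (g : ℝ → ℝ) (x : ℝ) : Prop := 0 < x ∧ x ≤ 1 ∧ g x ∉ g '' Ico 0 x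

/-- A left departure of `g` (viewed as a map on `[-1,0]`). -/
def LeftDeparture (g : ℝ → ℝ) (x : ℝ) : Prop := -1 ≤ x ∧ x < 0 ∧ g x ∉ g '' Ioc x 0

/-- A (right) contour point of `g`: a departure `α` such that every departure past `α`
is preceded (within `(α, x]`) by a departure of orientation opposite to that of `α`. -/
def ContourPoint (g : ℝ → ℝ) (α : ℝ) : Prop :=
  Departure g α ∧
    ∀ x, Departure g x → α < x → ∃ y, Departure g y ∧ α < y ∧ y ≤ x ∧ g α * g y < 0

/-- `[ym, yp]` is a liftable range for `t`. -/
def LiftableRange (t : ℝ → ℝ) (ym yp : ℝ) : Prop :=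
  -1 ≤ ym ∧ ym ≤ 0 ∧ 0 ≤ yp ∧ yp ≤ 1 ∧
  t '' Icc ym 0 ⊆ t '' Icc 0 1 ∧
  ¬ ∃ y₁ y₂, RadialDeparture t y₁ y₂ ∧ ym ≤ y₁ ∧ yp < y₂

/-- `f` is linear (affine) on the interval `[a,b]`. -/
def LinearOn (f : ℝ → ℝ) (a b : ℝ) : Prop :=
  ∀ x ∈ Icc a b, (b - a) * f x = (b - x) * f a + (x - a) * f b

/-- `f` is piecewise-linear on `[-1,1]`. -/
def PiecewiseLinear (f : ℝ → ℝ) : Prop :=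
  ∃ n : ℕ, ∃ c : ℕ → ℝ, c 0 = -1 ∧ c n = 1 ∧ (∀ i < n, c i < c (i + 1)) ∧
    ∀ i < n, LinearOn f (c i) (c (i + 1))

/-- `t` is the contour factor of `g` (for maps on `[0,1]`): the contour points of `g`
are `0 = α₀ < α₁ < ⋯ < α_n`, `t (i/n) = g (α i)`, and `t` is linear in between. -/
def IsContourFactor (g t : ℝ → ℝ) : Prop :=
  ∃ n : ℕ, 0 < n ∧ ∃ α : ℕ → ℝ, α 0 = 0 ∧ (∀ i < n, α i < α (i + 1)) ∧
    (∀ x, ContourPoint g x ↔ ∃ i, 1 ≤ i ∧ i ≤ n ∧ x = α i) ∧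
    (∀ i ≤ n, t ((i : ℝ) / (n : ℝ)) = g (α i)) ∧
    (∀ i < n, LinearOn t ((i : ℝ) / (n : ℝ)) (((i : ℝ) + 1) / (n : ℝ)))

/-- `t` is the radial contour factor of `f`: its restriction to `[0,1]` is the contour
factor of `f|[0,1]`, and `t|[-1,0] ∘ r` is the contour factor of `f|[-1,0] ∘ r`,
where `r x = -x`. -/
def IsRadialContourFactor (f t : ℝ → ℝ) : Prop :=
  IsContourFactor f t ∧ IsContourFactor (fun x => f (-x)) (fun x => t (-x))

/-- `f` is non-constant on each of `[0,1]` and `[-1,0]`. -/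
def NonConstSides (f : ℝ → ℝ) : Prop :=
  (∃ a ∈ Icc (0:ℝ) 1, ∃ b ∈ Icc (0:ℝ) 1, f a ≠ f b) ∧
  (∃ a ∈ Icc (-1:ℝ) 0, ∃ b ∈ Icc (-1:ℝ) 0, f a ≠ f b)

theorem stmt9 (t s f s₀ : ℝ → ℝ)
    (ht : Continuous t) (hs : Continuous s) (hf : Continuous f) (hs₀ : Continuous s₀)
    (ht0 : t 0 = 0) (hs0 : s 0 = 0) (hf0 : f 0 = 0)
    (hfs : f = t ∘ s)
    (hsmap : MapsTo s (Icc (-1:ℝ) 1) (Icc (-1:ℝ) 1))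
    (hs₀map : MapsTo s₀ (Icc (-1:ℝ) 1) (Icc (-1:ℝ) 1))
    (hsign₁ : ∀ z, 0 ≤ z → 0 ≤ s₀ z) (hsign₂ : ∀ z, z ≤ 0 → s₀ z ≤ 0)
    (hfs₀ : f = t ∘ s₀)
    (x x' ym yp : ℝ) (h0x : 0 ≤ x) (hxx' : x < x') (hx'1 : x' ≤ 1)
    (hym : ym < 0) (hyp : 0 ≤ yp)
    (hdep : (Departure s x ∧ 0 < s x) ∨ x = 0) (hsx : s x = yp)
    (himg : s '' Icc x x' = Icc ym yp) :
    LiftableRange t ym yp := by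
  have hs00 : s₀ 0 = 0 := le_antisymm (hsign₂ 0 le_rfl) (hsign₁ 0 le_rfl)
  have hymyp : ym ≤ yp := le_of_lt (lt_of_lt_of_le hym hyp)
  have hmem11 : ∀ v : ℝ, 0 ≤ v → v ≤ x' → v ∈ Icc (-1:ℝ) 1 := by
    intro v h1 h2; exact ⟨by linarith, by linarith⟩
  -- ym and yp are attained by s on [x,x']
  have hymmem : ym ∈ s '' Icc x x' := by rw [himg]; exact ⟨le_rfl, hymyp⟩
  have hypmem : yp ∈ s '' Icc x x' := by rw [himg]; exact ⟨hymyp, le_rfl⟩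
  obtain ⟨vm, hvm, hsvm⟩ := hymmem
  obtain ⟨vp, hvp, hsvp⟩ := hypmem
  have hbm : -1 ≤ ym := by
    have := hsmap (hmem11 vm (le_trans h0x hvm.1) hvm.2)
    rw [hsvm] at this; exact this.1
  have hbp : yp ≤ 1 := by
    have := hsmap (hmem11 vp (le_trans h0x hvp.1) hvp.2)
    rw [hsvp] at this; exact this.2
  refine ⟨hbm, hym.le, hyp, hbp, ?_, ?_⟩
  · -- condition (1)
    rintro q ⟨y, hy, rfl⟩
    have hy' : y ∈ s '' Icc x x' := by
      rw [himg]; exact ⟨hy.1, le_trans hy.2 hyp⟩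
    obtain ⟨v, hv, rfl⟩ := hy'
    have hv0 : (0:ℝ) ≤ v := le_trans h0x hv.1
    have hv1 : v ∈ Icc (-1:ℝ) 1 := hmem11 v hv0 hv.2
    refine ⟨s₀ v, ⟨hsign₁ v hv0, (hs₀map hv1).2⟩, ?_⟩
    have h1 : t (s₀ v) = f v := (congrFun hfs₀ v).symm
    have h2 : f v = t (s v) := congrFun hfs v
    rw [h1, h2]
  · -- condition (2): no radial departure past [ym, yp]
    rintro ⟨y₁, y₂, hrd, hy₁m, hy₂p⟩
    obtain ⟨hy₁n, hy₁0, hy₂0, hy₂1⟩ : -1 ≤ y₁ ∧ y₁ < 0 ∧ 0 < y₂ ∧ y₂ ≤ 1 := by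
      rcases hrd with ⟨a, b, c, d, _⟩ | ⟨a, b, c, d, _⟩ <;> exact ⟨a, b, c, d⟩
    have h0mem : (0:ℝ) ∈ Ioo y₁ y₂ := ⟨hy₁0, hy₂0⟩
    have hne : t y₁ ≠ t y₂ := by
      rcases hrd with ⟨_, _, _, _, him⟩ | ⟨_, _, _, _, him⟩
      · have h0' : t 0 ∈ Ioo (t y₁) (t y₂) := by rw [← him]; exact mem_image_of_mem t h0mem
        exact ne_of_lt (lt_trans h0'.1 h0'.2)
      · have h0' : t 0 ∈ Ioo (t y₂) (t y₁) := by rw [← him]; exact mem_image_of_mem t h0mem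
        exact ne_of_gt (lt_trans h0'.1 h0'.2)
    have hF1 : t y₁ ∉ t '' Ioo y₁ y₂ := by
      rcases hrd with ⟨_, _, _, _, him⟩ | ⟨_, _, _, _, him⟩ <;> rw [him]
      · exact fun h => lt_irrefl _ h.1
      · exact fun h => lt_irrefl _ h.2
    have hF2 : t y₂ ∉ t '' Ioo y₁ y₂ := by
      rcases hrd with ⟨_, _, _, _, him⟩ | ⟨_, _, _, _, him⟩ <;> rw [him]
      · exact fun h => lt_irrefl _ h.2
      · exact fun h => lt_irrefl _ h.1
    -- the first point w in [0,x'] where s reaches y₁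
    set A : Set ℝ := Icc 0 x' ∩ s ⁻¹' Iic y₁ with hA
    have hAclosed : IsClosed A := isClosed_Icc.inter (isClosed_Iic.preimage hs)
    have hy₁mem : y₁ ∈ s '' Icc x x' := by
      rw [himg]; exact ⟨hy₁m, le_trans hy₁0.le hyp⟩
    obtain ⟨z₀, hz₀, hsz₀⟩ := hy₁mem
    have hz₀A : z₀ ∈ A := ⟨⟨le_trans h0x hz₀.1, hz₀.2⟩, by simp [hsz₀, le_refl]⟩
    have hAne : A.Nonempty := ⟨z₀, hz₀A⟩
    have hAbdd : BddBelow A := ⟨0, fun v hv => hv.1.1⟩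
    set w : ℝ := sInf A with hwdef
    have hwA : w ∈ A := hAclosed.csInf_mem hAne hAbdd
    have hw0le : 0 ≤ w := hwA.1.1
    have hwx' : w ≤ x' := hwA.1.2
    have hnotA : ∀ v, 0 ≤ v → v < w → y₁ < s v := by
      intro v hv0 hvw
      by_contra h
      push_neg at h
      have : v ∈ A := ⟨⟨hv0, le_of_lt (lt_of_lt_of_le hvw hwx')⟩, h⟩
      exact absurd (csInf_le hAbdd this) (not_le.mpr hvw)
    have hw0 : 0 < w := by
      rcases lt_or_eq_of_le hw0le with h | h
      · exact h
      · exfalso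
        have h2 : s w ≤ y₁ := hwA.2
        rw [← h, hs0] at h2
        exact absurd h2 (not_le.mpr hy₁0)
    -- s w = y₁
    have hsw : s w = y₁ := by
      have hIVT := intermediate_value_Icc' hw0.le hs.continuousOn
      have : y₁ ∈ Icc (s w) (s 0) := ⟨hwA.2, by rw [hs0]; exact hy₁0.le⟩
      obtain ⟨v, hv, hsv⟩ := hIVT this
      rcases lt_or_eq_of_le hv.2 with hlt | heq
      · exact absurd hsv (ne_of_gt (hnotA v hv.1 hlt))
      · rw [← heq]; exact hsv
    -- key: s maps [0,w) into (y₁,y₂)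
    have hkey : ∀ v, 0 ≤ v → v < w → s v ∈ Ioo y₁ y₂ := by
      intro v hv0 hvw
      refine ⟨hnotA v hv0 hvw, ?_⟩
      by_cases hvx : x ≤ v
      · have hvmem : s v ∈ s '' Icc x x' :=
          mem_image_of_mem s ⟨hvx, le_of_lt (lt_of_lt_of_le hvw hwx')⟩
        rw [himg] at hvmem
        exact lt_of_le_of_lt hvmem.2 hy₂p
      · push_neg at hvx
        rcases hdep with ⟨hdx, _⟩ | hx0
        · by_contra h
          push_neg at h
          have hypv : yp ∈ Icc (s 0) (s v) := by
            rw [hs0]; exact ⟨hyp, by linarith⟩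
          obtain ⟨v', hv', hsv'⟩ := intermediate_value_Icc hv0 hs.continuousOn hypv
          refine hdx.2.2 ⟨v', ⟨hv'.1, lt_of_le_of_lt hv'.2 hvx⟩, ?_⟩
          rw [hsv', hsx]
        · exact absurd (lt_of_le_of_lt hv0 hvx) (by rw [hx0]; exact lt_irrefl 0)
    -- f w = t y₁, so s₀ w must be above y₂
    have hfw : f w = t y₁ := by rw [hfs]; simp only [Function.comp_apply, hsw]
    have hts₀w : t (s₀ w) = t y₁ := by
      have := congrFun hfs₀ w
      rw [hfw] at this; exact this.symm
    have hs₀w0 : 0 ≤ s₀ w := hsign₁ w hw0.le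
    have hpy₂ : y₂ < s₀ w := by
      rcases lt_trichotomy (s₀ w) y₂ with h | h | h
      · exfalso
        apply hF1
        rw [← hts₀w]
        exact mem_image_of_mem t ⟨lt_of_lt_of_le hy₁0 hs₀w0, h⟩
      · exact absurd (by rw [← h, hts₀w]) (Ne.symm hne)
      · exact h
    -- IVT for s₀ on [0,w]: some u < w with s₀ u = y₂
    have hy₂mem : y₂ ∈ Icc (s₀ 0) (s₀ w) := by
      rw [hs00]; exact ⟨hy₂0.le, hpy₂.le⟩
    obtain ⟨u, hu, hsu⟩ := intermediate_value_Icc hw0.le hs₀.continuousOn hy₂mem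
    have huw : u < w := by
      rcases lt_or_eq_of_le hu.2 with h | h
      · exact h
      · exfalso; rw [h] at hsu; exact absurd hsu (ne_of_gt hpy₂)
    -- contradiction: f u = t y₂ but s u ∈ (y₁, y₂)
    have hfu : f u = t y₂ := by rw [hfs₀]; simp only [Function.comp_apply, hsu]
    apply hF2
    have h1 : f u = t (s u) := congrFun hfs u
    have h2 : t (s u) = t y₂ := by rw [← h1, hfu]
    rw [← h2]
    exact mem_image_of_mem t (hkey u hu.1 huw)
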